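/- arXiv:0712.1269 — 3 statements merged into one kernel-verified Lean document; each statement's English description precedes it below -/
import Mathlib

section
/- If a ∈ ℝ^E is metric and the inequality a·x ≥ α is valid for the symmetric traveling salesman polytope S (i.e., a·χ^{E(C)} ≥ α for every Hamiltonian cycle C on V), then a·x ≥ α holds for every x in the graphical traveling salesman polyhedron P. -/
open scoped BigOperators

abbrev Edge (n : ℕ) := {e : Sym2 (Fin n) // ¬ e.IsDiag}

namespace TSP
variable {n : ℕ}
noncomputable section

def dot (a x : Edge n → ℝ) : ℝ := ∑ e, a e * x e
def ev (a : Edge n → ℝ) (u v : Fin n) : ℝ :=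
  if h : u = v then 0 else a ⟨s(u, v), fun hd => h (Sym2.mk_isDiag_iff.mp hd)⟩
def indic (u v : Fin n) : Edge n → ℝ := fun e => if e.val = s(u, v) then 1 else 0
def delta (u : Fin n) : Edge n → ℝ := fun e => if u ∈ e.val then 1/2 else 0
def RootedTri (u v w : Fin n) : Prop := v ≠ w ∧ u ≠ v ∧ u ≠ w
def tri (a : Edge n → ℝ) (u v w : Fin n) : ℝ := ev a v u + ev a u w - ev a v w
def IsMetric (a : Edge n → ℝ) : Prop := ∀ u v w, RootedTri u v w → 0 ≤ tri a u v w
def IsTT (a : Edge n → ℝ) : Prop :=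
  IsMetric a ∧ ∀ u, ∃ v w, RootedTri u v w ∧ tri a u v w = 0
def lam (a : Edge n → ℝ) (u : Fin n) : ℝ :=
  sInf {r | ∃ v w, RootedTri u v w ∧ r = tri a u v w}
def theta (a : Edge n → ℝ) : Edge n → ℝ := fun e => a e - ∑ u, lam a u * delta u e
def zvec (n : ℕ) : Edge n → ℝ := fun _ => 2 / ((n : ℝ) - 1)
def gamma (a : Edge n → ℝ) : ℝ := -1 + dot a (zvec n) - ∑ u, lam a u
def nextF (i : Fin n) : Fin n := ⟨(i.val + 1) % n, Nat.mod_lt _ i.pos⟩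
def hamVec (σ : Equiv.Perm (Fin n)) : Edge n → ℝ :=
  fun e => if ∃ i : Fin n, e.val = s(σ i, σ (nextF i)) then 1 else 0
def stsp (n : ℕ) : Set (Edge n → ℝ) :=
  convexHull ℝ {x | ∃ σ : Equiv.Perm (Fin n), x = hamVec σ}
def degree (x : Edge n → ℝ) (u : Fin n) : ℝ := ∑ e, if u ∈ e.val then x e else 0
lemma ev_symm (a : Edge n → ℝ) (u v : Fin n) : ev a u v = ev a v u := by
  unfold ev
  rcases eq_or_ne u v with h | h
  · subst h; simp
  · rw [dif_neg h, dif_neg (Ne.symm h)]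
    congr 1
    exact Subtype.ext (Sym2.eq_swap)
def supportGraph (x : Edge n → ℝ) : SimpleGraph (Fin n) where
  Adj u v := u ≠ v ∧ 0 < ev x u v
  symm := ⟨fun u v h => ⟨h.1.symm, by rw [ev_symm]; exact h.2⟩⟩
  loopless := ⟨fun u h => h.1 rfl⟩
def IsEulerian (x : Edge n → ℝ) : Prop :=
  (∀ e, ∃ m : ℕ, x e = m) ∧ (supportGraph x).Connected ∧
    ∀ u, ∃ m : ℕ, 0 < m ∧ degree x u = 2 * m
def gtsp (n : ℕ) : Set (Edge n → ℝ) := convexHull ℝ {x | IsEulerian x}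
def IsFaceOf (Q F : Set (Edge n → ℝ)) : Prop :=
  ∃ a α, (∀ x ∈ Q, α ≤ dot a x) ∧ F = {x ∈ Q | dot a x = α}
def IsGood (F : Set (Edge n → ℝ)) : Prop := ∀ e : Edge n, ∃ x ∈ F, 0 < x e
def adim (X : Set (Edge n → ℝ)) : ℕ := Module.finrank ℝ (affineSpan ℝ X).direction
def direc (F : Set (Edge n → ℝ)) : Submodule ℝ (Edge n → ℝ) :=
  Submodule.span ℝ {d | ∃ x ∈ F, ∃ y ∈ F, d = y - x}
def shortcut (u v w : Fin n) : Edge n → ℝ :=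
  fun e => indic v w e - indic v u e - indic u w e
def gtspPolar (n : ℕ) : Set (Edge n → ℝ) := {b | ∀ x ∈ gtsp n, 1 ≤ dot b x}

/-- The face of `S` defined by `a ∈ D_S`. -/
def faceS (a : Edge n → ℝ) : Set (Edge n → ℝ) :=
  {x ∈ stsp n | dot a x = dot a (zvec n) - 1}

/-- `D_S`: the points `a ∈ L` whose inequality `a·x ≥ a·z − 1` is valid for `S`
and defines a nonempty good face of `S`. -/
def DS (n : ℕ) : Set (Edge n → ℝ) :=
  {a | (∀ u, dot (delta u) a = 0) ∧
       (∀ x ∈ stsp n, dot a (zvec n) - 1 ≤ dot a x) ∧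
       (faceS a).Nonempty ∧ IsGood (faceS a)}

/-- `D_P`: TT points of `P^△` defining nonempty good faces of `P`. -/
def DP (n : ℕ) : Set (Edge n → ℝ) :=
  {b | b ∈ gtspPolar n ∧ IsTT b ∧
       ({x ∈ gtsp n | dot b x = 1}).Nonempty ∧ IsGood {x ∈ gtsp n | dot b x = 1}}

/-- `𝔉(a)`: faces of `P` definable by rotated versions of `a·x ≥ a·z − 1`. -/
def Frot (a : Edge n → ℝ) : Set (Set (Edge n → ℝ)) :=
  {F | ∃ ξ : Fin n → ℝ,
    (∀ x ∈ gtsp n,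
      dot a (zvec n) - 1 + dot (∑ u, ξ u • delta u) (zvec n)
        ≤ dot (a + ∑ u, ξ u • delta u) x) ∧
    F = {x ∈ gtsp n |
      dot (a + ∑ u, ξ u • delta u) x
        = dot a (zvec n) - 1 + dot (∑ u, ξ u • delta u) (zvec n)}}

/-- `E^u(a)`: the edges achieving the minimal triangle slack rooted at `u`. -/
def Eu (a : Edge n → ℝ) (u : Fin n) : Set (Edge n) :=
  {e | ∃ v w, RootedTri u v w ∧ e.val = s(v, w) ∧ tri a u v w = lam a u}

def IsFacetP (n : ℕ) (G : Set (Edge n → ℝ)) : Prop :=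
  IsFaceOf (gtsp n) G ∧ adim G = n * (n - 1) / 2 - 1
def IsFacetS (n : ℕ) (F : Set (Edge n → ℝ)) : Prop :=
  IsFaceOf (stsp n) F ∧ adim F + 1 = adim (stsp n)
def IsNRFacet (n : ℕ) (G : Set (Edge n → ℝ)) : Prop :=
  IsFacetP n G ∧ IsFacetS n (G ∩ stsp n)
def IsDegreeFacet (n : ℕ) (G : Set (Edge n → ℝ)) : Prop :=
  ∃ u, G = {x ∈ gtsp n | dot (delta u) x = 1}
def IsNonNegFacet (n : ℕ) (G : Set (Edge n → ℝ)) : Prop :=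
  ∃ e : Edge n, G = {x ∈ gtsp n | x e = 0}
def IsNonNRFacet (n : ℕ) (G : Set (Edge n → ℝ)) : Prop :=
  IsFacetP n G ∧ IsGood G ∧ ¬ IsDegreeFacet n G ∧
    adim (G ∩ stsp n) + 1 < adim (stsp n)

/-- Solution set of the relaxation `R_B` (degree inequalities). -/
def RBge {k : ℕ} (n : ℕ) (b : Fin k → Edge n → ℝ) : Set (Edge n → ℝ) :=
  {x | (∀ j, 1 ≤ dot (b j) x) ∧ (∀ v, 1 ≤ dot (delta v) x) ∧ ∀ e, 0 ≤ x e}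

/-- Solution set of `R_B` with degree equations. -/
def RBeq {k : ℕ} (n : ℕ) (b : Fin k → Edge n → ℝ) : Set (Edge n → ℝ) :=
  {x | (∀ j, 1 ≤ dot (b j) x) ∧ (∀ v, dot (delta v) x = 1) ∧ ∀ e, 0 ≤ x e}

/-- The parsimonious property of the relaxation `R_B`. -/
def Parsimonious {k : ℕ} (n : ℕ) (b : Fin k → Edge n → ℝ) : Prop :=
  ∀ c : Edge n → ℝ, IsMetric c →
    sInf (dot c '' RBge n b) = sInf (dot c '' RBeq n b)

/-- Adjacency in the ridge graph of `P`. -/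
def RidgeAdj (n : ℕ) (F G : Set (Edge n → ℝ)) : Prop :=
  IsFacetP n F ∧ IsFacetP n G ∧ F ≠ G ∧ adim (F ∩ G) = n * (n - 1) / 2 - 2

/-- `q_I = Σ_{u ∉ I} δ_u`. -/
def qI (n : ℕ) (I : Finset (Fin n)) : Edge n → ℝ := ∑ u ∈ Iᶜ, delta u

/-- The face `G_I` of `P`. -/
def GI (n : ℕ) (a : Edge n → ℝ) (I : Finset (Fin n)) : Set (Edge n → ℝ) :=
  {x ∈ gtsp n | dot (theta a + qI n I) x = gamma a + dot (qI n I) (zvec n)}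

end

section AuxStmt0
variable {n : ℕ}
noncomputable section

/-! ### Edge constructors and natural multiplicities -/

def mkE (u v : Fin n) (h : u ≠ v) : Edge n :=
  ⟨s(u, v), fun hd => h (Sym2.mk_isDiag_iff.mp hd)⟩

@[simp] lemma mkE_val (u v : Fin n) (h : u ≠ v) : (mkE u v h).val = s(u,v) := rfl

lemma ev_ne (a : Edge n → ℝ) {u v : Fin n} (h : u ≠ v) : ev a u v = a (mkE u v h) := by
  rw [ev, dif_neg h]; rfl

def em (f : Edge n → ℕ) (u v : Fin n) : ℕ :=
  if h : u = v then 0 else f (mkE u v h)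

lemma em_ne (f : Edge n → ℕ) {u v : Fin n} (h : u ≠ v) : em f u v = f (mkE u v h) := by
  rw [em, dif_neg h]

@[simp] lemma em_self (f : Edge n → ℕ) (u : Fin n) : em f u u = 0 := by simp [em]

lemma mkE_symm (u v : Fin n) (h : u ≠ v) : mkE u v h = mkE v u h.symm :=
  Subtype.ext (Sym2.eq_swap)

lemma em_symm (f : Edge n → ℕ) (u v : Fin n) : em f u v = em f v u := by
  rcases eq_or_ne u v with h | h
  · subst h; rfl
  · rw [em_ne f h, em_ne f h.symm, mkE_symm]

lemma em_pos_ne {f : Edge n → ℕ} {u v : Fin n} (h : 0 < em f u v) : u ≠ v := by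
  rintro rfl; simp at h

lemma edge_cases (e : Edge n) : ∃ (u v : Fin n) (h : u ≠ v), e = mkE u v h := by
  obtain ⟨z, hz⟩ := e
  induction z using Sym2.inductionOn with
  | hf x y =>
    have hxy : x ≠ y := fun h => hz (by simp [h])
    exact ⟨x, y, hxy, rfl⟩

lemma ev_cast (f : Edge n → ℕ) (u v : Fin n) :
    ev (fun e => (f e : ℝ)) u v = (em f u v : ℝ) := by
  rcases eq_or_ne u v with h | h
  · subst h; simp [ev]
  · rw [ev_ne _ h, em_ne f h]

/-! ### Degrees -/

def degN (f : Edge n → ℕ) (u : Fin n) : ℕ := ∑ v, em f u v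

lemma inner_sum_edge {M : Type*} [AddCommMonoid M] (u : Fin n) (e : Edge n) (c : M) :
    ∑ v : Fin n, (if e.val = s(u,v) then c else 0) = if u ∈ e.val then c else 0 := by
  obtain ⟨x, y, hxy, rfl⟩ := edge_cases e
  rcases eq_or_ne u x with rfl | hux
  · rw [if_pos (by simp [mkE])]
    rw [Finset.sum_congr rfl (fun v _ => ?_), Finset.sum_ite_eq' Finset.univ y (fun _ => c)]
    · simp
    · apply if_congr _ rfl rfl
      simp only [mkE_val, Sym2.eq_iff]
      aesop
  · rcases eq_or_ne u y with rfl | huy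
    · rw [if_pos (by simp [mkE])]
      rw [Finset.sum_congr rfl (fun v _ => ?_), Finset.sum_ite_eq' Finset.univ x (fun _ => c)]
      · simp
      · apply if_congr _ rfl rfl
        simp only [mkE_val, Sym2.eq_iff]
        aesop
    · rw [if_neg (by simp [mkE, Sym2.mem_iff]; tauto)]
      apply Finset.sum_eq_zero
      intro v _
      rw [if_neg]
      simp only [mkE_val, Sym2.eq_iff]
      rintro (⟨rfl, rfl⟩ | ⟨rfl, rfl⟩)
      · exact hux rfl
      · exact huy rfl

lemma em_as_sum (f : Edge n → ℕ) (u v : Fin n) :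
    em f u v = ∑ e : Edge n, if e.val = s(u,v) then f e else 0 := by
  rcases eq_or_ne u v with rfl | h
  · rw [em_self]
    symm; apply Finset.sum_eq_zero
    intro e _
    rw [if_neg]
    intro hc
    exact e.property (by rw [hc]; simp)
  · rw [em_ne f h]
    rw [Finset.sum_eq_single (mkE u v h)]
    · simp
    · intro e _ hne
      rw [if_neg]
      intro hc
      exact hne (Subtype.ext hc)
    · intro h'; exact absurd (Finset.mem_univ _) h'

lemma degN_eq_degreeE (f : Edge n → ℕ) (u : Fin n) :
    degN f u = ∑ e : Edge n, if u ∈ e.val then f e else 0 := by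
  rw [degN]
  calc ∑ v, em f u v = ∑ v, ∑ e : Edge n, if e.val = s(u,v) then f e else 0 :=
        Finset.sum_congr rfl (fun v _ => em_as_sum f u v)
    _ = ∑ e : Edge n, ∑ v, if e.val = s(u,v) then f e else 0 := Finset.sum_comm
    _ = ∑ e : Edge n, if u ∈ e.val then f e else 0 :=
        Finset.sum_congr rfl (fun e _ => inner_sum_edge u e (f e))

lemma degree_cast (f : Edge n → ℕ) (u : Fin n) :
    degree (fun e => (f e : ℝ)) u = (degN f u : ℝ) := by
  rw [degree, degN_eq_degreeE]
  push_cast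
  exact Finset.sum_congr rfl (fun e _ => by split <;> simp)

/-! ### Support graph of a natural vector -/

def SG (f : Edge n → ℕ) : SimpleGraph (Fin n) := supportGraph (fun e => (f e : ℝ))

lemma SG_adj {f : Edge n → ℕ} {u v : Fin n} : (SG f).Adj u v ↔ 0 < em f u v := by
  constructor
  · rintro (⟨h1, h2⟩ : u ≠ v ∧ 0 < ev (fun e => (f e : ℝ)) u v)
    rw [ev_cast] at h2
    exact_mod_cast h2
  · intro h
    exact (⟨em_pos_ne h, by rw [ev_cast]; exact_mod_cast h⟩ : u ≠ v ∧ 0 < ev (fun e => (f e : ℝ)) u v)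

lemma reach_closure {G : SimpleGraph (Fin n)} {S : Set (Fin n)}
    (hS : ∀ p ∈ S, ∀ q, G.Adj p q → q ∈ S) {p q : Fin n}
    (h : G.Reachable p q) (hp : p ∈ S) : q ∈ S := by
  obtain ⟨w⟩ := h
  induction w with
  | nil => exact hp
  | cons h' w ih => exact ih (hS _ hp _ h')

lemma reach_lift {G H : SimpleGraph (Fin n)}
    (hGH : ∀ p q, G.Adj p q → H.Reachable p q) {p q : Fin n}
    (h : G.Reachable p q) : H.Reachable p q := by
  obtain ⟨w⟩ := h
  induction w with
  | nil => exact SimpleGraph.Reachable.refl _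
  | cons h' w ih => exact (hGH _ _ h').trans ih

/-! ### Metric nonnegativity -/

lemma exists_third (hn : 5 ≤ n) (u w : Fin n) : ∃ v : Fin n, v ≠ u ∧ v ≠ w := by
  by_contra h
  push_neg at h
  have hsub : (Finset.univ : Finset (Fin n)) ⊆ {u, w} := by
    intro v _
    rcases eq_or_ne v u with rfl | hvu
    · simp
    · simp [h v hvu]
  have := Finset.card_le_card hsub
  rw [Finset.card_univ, Fintype.card_fin] at this
  have h2 : ({u, w} : Finset (Fin n)).card ≤ 2 :=
    le_trans (Finset.card_insert_le _ _) (by simp)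
  omega

lemma ev_nonneg {a : Edge n → ℝ} (hn : 5 ≤ n) (hmet : IsMetric a) (u w : Fin n) :
    0 ≤ ev a u w := by
  rcases eq_or_ne u w with rfl | huw
  · simp [ev]
  obtain ⟨v, hvu, hvw⟩ := exists_third hn u w
  have t1 := hmet u v w ⟨fun h => hvw h, fun h => hvu h.symm, huw⟩
  have t2 := hmet w v u ⟨fun h => hvu h, fun h => hvw h.symm, huw.symm⟩
  rw [tri] at t1 t2
  have e1 := ev_symm a v u
  have e2 := ev_symm a w u
  have e3 := ev_symm a v w
  linarith

lemma a_nonneg {a : Edge n → ℝ} (hn : 5 ≤ n) (hmet : IsMetric a) (e : Edge n) :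
    0 ≤ a e := by
  obtain ⟨u, v, h, rfl⟩ := edge_cases e
  rw [← ev_ne a h]
  exact ev_nonneg hn hmet u v

end
end AuxStmt0
section AuxStmt0B
variable {n : ℕ}
noncomputable section

/-! ### The split (shortcut) operation -/

def splitF (f : Edge n → ℕ) (u v w : Fin n) : Edge n → ℕ := fun e =>
  if e.val = s(u,v) then f e - 1 else if e.val = s(u,w) then f e - 1
  else if e.val = s(v,w) then f e + 1 else f e

lemma sym2_uv_ne_uw {u v w : Fin n} (huw : u ≠ w) (hvw : v ≠ w) : s(u,v) ≠ s(u,w) := by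
  intro h
  rcases Sym2.eq_iff.mp h with ⟨-, h'⟩ | ⟨h', -⟩
  · exact hvw h'
  · exact huw h'

lemma sym2_uv_ne_vw {u v w : Fin n} (huv : u ≠ v) (huw : u ≠ w) : s(u,v) ≠ s(v,w) := by
  intro h
  rcases Sym2.eq_iff.mp h with ⟨h', -⟩ | ⟨h', -⟩
  · exact huv h'
  · exact huw h'

lemma sym2_uw_ne_vw {u v w : Fin n} (huv : u ≠ v) (hvw : v ≠ w) : s(u,w) ≠ s(v,w) := by
  intro h
  rcases Sym2.eq_iff.mp h with ⟨h', -⟩ | ⟨-, h''⟩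
  · exact huv h'
  · exact hvw h''.symm

lemma splitF_apply (f : Edge n → ℕ) {u v w : Fin n} (huv : u ≠ v) (huw : u ≠ w) (hvw : v ≠ w)
    (e : Edge n) :
    splitF f u v w e = if e = mkE u v huv then f e - 1 else if e = mkE u w huw then f e - 1
      else if e = mkE v w hvw then f e + 1 else f e := by
  have h1 : (e.val = s(u,v)) ↔ e = mkE u v huv :=
    ⟨fun h => Subtype.ext h, fun h => by rw [h]; rfl⟩
  have h2 : (e.val = s(u,w)) ↔ e = mkE u w huw :=
    ⟨fun h => Subtype.ext h, fun h => by rw [h]; rfl⟩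
  have h3 : (e.val = s(v,w)) ↔ e = mkE v w hvw :=
    ⟨fun h => Subtype.ext h, fun h => by rw [h]; rfl⟩
  simp only [splitF, h1, h2, h3]

lemma splitF_comm (f : Edge n → ℕ) {u v w : Fin n} (huw : u ≠ w) (hvw : v ≠ w) :
    splitF f u v w = splitF f u w v := by
  funext e
  simp only [splitF]
  by_cases h1 : e.val = s(u,v) <;> by_cases h2 : e.val = s(u,w)
  · exact absurd (h1 ▸ h2) (sym2_uv_ne_uw huw hvw)
  · simp [h1, h2]
  · simp [h1, h2]
  · simp only [if_neg h1, if_neg h2]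
    rw [show s(w,v) = s(v,w) from Sym2.eq_swap]

lemma em_splitF (f : Edge n → ℕ) {u v w : Fin n} (huv : u ≠ v) (huw : u ≠ w) (hvw : v ≠ w)
    (p q : Fin n) :
    em (splitF f u v w) p q = if s(p,q) = s(u,v) then em f p q - 1
      else if s(p,q) = s(u,w) then em f p q - 1
      else if s(p,q) = s(v,w) then em f p q + 1 else em f p q := by
  rcases eq_or_ne p q with rfl | hpq
  · have hd : ∀ (x y : Fin n), s(p,p) = s(x,y) → x = y := by
      intro x y h
      rcases Sym2.eq_iff.mp h with ⟨h1, h2⟩ | ⟨h1, h2⟩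
      · exact h1.symm.trans h2
      · exact h2.symm.trans h1
    have c1 : s(p,p) ≠ s(u,v) := fun h => huv (hd u v h)
    have c2 : s(p,p) ≠ s(u,w) := fun h => huw (hd u w h)
    have c3 : s(p,p) ≠ s(v,w) := fun h => hvw (hd v w h)
    simp [c1, c2, c3]
  · rw [em_ne _ hpq, em_ne f hpq]
    simp only [splitF, mkE_val]
    congr

lemma em_splitF_uv (f : Edge n → ℕ) {u v w : Fin n} (huv : u ≠ v) (huw : u ≠ w) (hvw : v ≠ w) :
    em (splitF f u v w) u v = em f u v - 1 := by
  rw [em_splitF f huv huw hvw, if_pos rfl]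

lemma em_splitF_uw (f : Edge n → ℕ) {u v w : Fin n} (huv : u ≠ v) (huw : u ≠ w) (hvw : v ≠ w) :
    em (splitF f u v w) u w = em f u w - 1 := by
  rw [em_splitF f huv huw hvw, if_neg (sym2_uv_ne_uw huw hvw ∘ Eq.symm), if_pos rfl]

lemma em_splitF_vw (f : Edge n → ℕ) {u v w : Fin n} (huv : u ≠ v) (huw : u ≠ w) (hvw : v ≠ w) :
    em (splitF f u v w) v w = em f v w + 1 := by
  rw [em_splitF f huv huw hvw, if_neg (sym2_uv_ne_vw huv huw ∘ Eq.symm),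
    if_neg (sym2_uw_ne_vw huv hvw ∘ Eq.symm), if_pos rfl]

lemma em_splitF_other (f : Edge n → ℕ) {u v w : Fin n} (huv : u ≠ v) (huw : u ≠ w) (hvw : v ≠ w)
    {p q : Fin n} (h1 : s(p,q) ≠ s(u,v)) (h2 : s(p,q) ≠ s(u,w)) (h3 : s(p,q) ≠ s(v,w)) :
    em (splitF f u v w) p q = em f p q := by
  rw [em_splitF f huv huw hvw, if_neg h1, if_neg h2, if_neg h3]

lemma sym2_ne_of_ne {p q u x : Fin n} (hp : p ≠ u) (hq : q ≠ u) : s(p,q) ≠ s(u,x) := by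
  intro h
  rcases Sym2.eq_iff.mp h with ⟨h', -⟩ | ⟨-, h'⟩
  · exact hp h'
  · exact hq h'

lemma em_splitF_offu (f : Edge n → ℕ) {u v w : Fin n} (huv : u ≠ v) (huw : u ≠ w) (hvw : v ≠ w)
    {p q : Fin n} (hp : p ≠ u) (hq : q ≠ u) :
    em f p q ≤ em (splitF f u v w) p q := by
  rw [em_splitF f huv huw hvw, if_neg (sym2_ne_of_ne hp hq), if_neg (sym2_ne_of_ne hp hq)]
  split <;> omega

lemma degN_splitF_u (f : Edge n → ℕ) {u v w : Fin n} (huv : u ≠ v) (huw : u ≠ w) (hvw : v ≠ w)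
    (hem1 : 0 < em f u v) (hem2 : 0 < em f u w) :
    degN (splitF f u v w) u + 2 = degN f u := by
  unfold degN
  rw [← Finset.add_sum_erase _ _ (Finset.mem_univ v),
      ← Finset.add_sum_erase _ (em f u) (Finset.mem_univ v),
      ← Finset.add_sum_erase _ _ (Finset.mem_erase.mpr ⟨Ne.symm hvw, Finset.mem_univ w⟩),
      ← Finset.add_sum_erase _ (em f u) (Finset.mem_erase.mpr ⟨Ne.symm hvw, Finset.mem_univ w⟩)]
  have hrest : ∑ q ∈ (Finset.univ.erase v).erase w, em (splitF f u v w) u q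
      = ∑ q ∈ (Finset.univ.erase v).erase w, em f u q := by
    apply Finset.sum_congr rfl
    intro q hq
    have h1 := Finset.mem_erase.mp hq
    have h2 := Finset.mem_erase.mp h1.2
    apply em_splitF_other f huv huw hvw
    · intro h
      rcases Sym2.eq_iff.mp h with ⟨-, h'⟩ | ⟨h', -⟩
      · exact h2.1 h'
      · exact huv h'
    · intro h
      rcases Sym2.eq_iff.mp h with ⟨-, h'⟩ | ⟨h', -⟩
      · exact h1.1 h'
      · exact huw h'
    · intro h
      rcases Sym2.eq_iff.mp h with ⟨h', -⟩ | ⟨h', -⟩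
      · exact huv h'
      · exact huw h'
  rw [hrest, em_splitF_uv f huv huw hvw, em_splitF_uw f huv huw hvw]
  omega

lemma degN_splitF_v (f : Edge n → ℕ) {u v w : Fin n} (huv : u ≠ v) (huw : u ≠ w) (hvw : v ≠ w)
    (hem1 : 0 < em f u v) :
    degN (splitF f u v w) v = degN f v := by
  unfold degN
  rw [← Finset.add_sum_erase _ _ (Finset.mem_univ u),
      ← Finset.add_sum_erase _ (em f v) (Finset.mem_univ u),
      ← Finset.add_sum_erase _ _ (Finset.mem_erase.mpr ⟨Ne.symm huw, Finset.mem_univ w⟩),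
      ← Finset.add_sum_erase _ (em f v) (Finset.mem_erase.mpr ⟨Ne.symm huw, Finset.mem_univ w⟩)]
  have hrest : ∑ q ∈ (Finset.univ.erase u).erase w, em (splitF f u v w) v q
      = ∑ q ∈ (Finset.univ.erase u).erase w, em f v q := by
    apply Finset.sum_congr rfl
    intro q hq
    have h1 := Finset.mem_erase.mp hq
    have h2 := Finset.mem_erase.mp h1.2
    apply em_splitF_other f huv huw hvw
    · intro h
      rcases Sym2.eq_iff.mp h with ⟨h', -⟩ | ⟨-, h'⟩
      · exact huv h'.symm
      · exact h2.1 h'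
    · intro h
      rcases Sym2.eq_iff.mp h with ⟨h', -⟩ | ⟨h', -⟩
      · exact huv h'.symm
      · exact hvw h'
    · intro h
      rcases Sym2.eq_iff.mp h with ⟨-, h'⟩ | ⟨h', -⟩
      · exact h1.1 h'
      · exact hvw h'
  rw [hrest]
  have e1 : em (splitF f u v w) v u = em f v u - 1 := by
    rw [em_symm, em_symm f, em_splitF_uv f huv huw hvw]
  have e2 : em (splitF f u v w) v w = em f v w + 1 := em_splitF_vw f huv huw hvw
  have e3 : 0 < em f v u := by rw [em_symm]; exact hem1
  omega

lemma degN_splitF_w (f : Edge n → ℕ) {u v w : Fin n} (huv : u ≠ v) (huw : u ≠ w) (hvw : v ≠ w)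
    (hem2 : 0 < em f u w) :
    degN (splitF f u v w) w = degN f w := by
  rw [splitF_comm f huw hvw]
  exact degN_splitF_v f huw huv (Ne.symm hvw) hem2

lemma degN_splitF_other (f : Edge n → ℕ) {u v w : Fin n} (huv : u ≠ v) (huw : u ≠ w) (hvw : v ≠ w)
    {p : Fin n} (hpu : p ≠ u) (hpv : p ≠ v) (hpw : p ≠ w) :
    degN (splitF f u v w) p = degN f p := by
  unfold degN
  apply Finset.sum_congr rfl
  intro q _
  apply em_splitF_other f huv huw hvw
  · intro h
    rcases Sym2.eq_iff.mp h with ⟨h', -⟩ | ⟨h', -⟩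
    · exact hpu h'
    · exact hpv h'
  · intro h
    rcases Sym2.eq_iff.mp h with ⟨h', -⟩ | ⟨h', -⟩
    · exact hpu h'
    · exact hpw h'
  · intro h
    rcases Sym2.eq_iff.mp h with ⟨h', -⟩ | ⟨h', -⟩
    · exact hpv h'
    · exact hpw h'

lemma mkE_uv_ne_uw {u v w : Fin n} (huv : u ≠ v) (huw : u ≠ w) (hvw : v ≠ w) :
    mkE u v huv ≠ mkE u w huw :=
  fun h => sym2_uv_ne_uw huw hvw (congrArg Subtype.val h)

lemma mkE_uv_ne_vw {u v w : Fin n} (huv : u ≠ v) (huw : u ≠ w) (hvw : v ≠ w) :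
    mkE u v huv ≠ mkE v w hvw :=
  fun h => sym2_uv_ne_vw huv huw (congrArg Subtype.val h)

lemma mkE_uw_ne_vw {u v w : Fin n} (huv : u ≠ v) (huw : u ≠ w) (hvw : v ≠ w) :
    mkE u w huw ≠ mkE v w hvw :=
  fun h => sym2_uw_ne_vw huv hvw (congrArg Subtype.val h)

lemma sum_splitF (f : Edge n → ℕ) {u v w : Fin n} (huv : u ≠ v) (huw : u ≠ w) (hvw : v ≠ w)
    (hem1 : 0 < em f u v) (hem2 : 0 < em f u w) :
    (∑ e, splitF f u v w e) + 1 = ∑ e, f e := by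
  have h1 : 1 ≤ f (mkE u v huv) := by rw [← em_ne f huv]; exact hem1
  have h2 : 1 ≤ f (mkE u w huw) := by rw [← em_ne f huw]; exact hem2
  have hne1 := mkE_uv_ne_uw huv huw hvw
  have hne2 := mkE_uv_ne_vw huv huw hvw
  have hne3 := mkE_uw_ne_vw huv huw hvw
  have m1 : mkE u w huw ∈ Finset.univ.erase (mkE u v huv) :=
    Finset.mem_erase.mpr ⟨Ne.symm hne1, Finset.mem_univ _⟩
  have m2 : mkE v w hvw ∈ (Finset.univ.erase (mkE u v huv)).erase (mkE u w huw) :=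
    Finset.mem_erase.mpr ⟨Ne.symm hne3, Finset.mem_erase.mpr ⟨Ne.symm hne2, Finset.mem_univ _⟩⟩
  rw [← Finset.add_sum_erase _ _ (Finset.mem_univ (mkE u v huv)),
      ← Finset.add_sum_erase _ f (Finset.mem_univ (mkE u v huv)),
      ← Finset.add_sum_erase _ _ m1, ← Finset.add_sum_erase _ f m1,
      ← Finset.add_sum_erase _ _ m2, ← Finset.add_sum_erase _ f m2]
  have hrest : ∑ e ∈ (((Finset.univ.erase (mkE u v huv)).erase (mkE u w huw)).erase (mkE v w hvw)),
      splitF f u v w e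
      = ∑ e ∈ (((Finset.univ.erase (mkE u v huv)).erase (mkE u w huw)).erase (mkE v w hvw)), f e := by
    apply Finset.sum_congr rfl
    intro e he
    have h1' := Finset.mem_erase.mp he
    have h2' := Finset.mem_erase.mp h1'.2
    have h3' := Finset.mem_erase.mp h2'.2
    rw [splitF_apply f huv huw hvw, if_neg h3'.1, if_neg h2'.1, if_neg h1'.1]
  rw [hrest,
    show splitF f u v w (mkE u v huv) = f (mkE u v huv) - 1 by
      rw [splitF_apply f huv huw hvw, if_pos rfl],
    show splitF f u v w (mkE u w huw) = f (mkE u w huw) - 1 by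
      rw [splitF_apply f huv huw hvw, if_neg (Ne.symm hne1), if_pos rfl],
    show splitF f u v w (mkE v w hvw) = f (mkE v w hvw) + 1 by
      rw [splitF_apply f huv huw hvw, if_neg (Ne.symm hne2), if_neg (Ne.symm hne3), if_pos rfl]]
  omega

lemma dot_splitF (a : Edge n → ℝ) (f : Edge n → ℕ) {u v w : Fin n}
    (huv : u ≠ v) (huw : u ≠ w) (hvw : v ≠ w)
    (hem1 : 0 < em f u v) (hem2 : 0 < em f u w) :
    dot a (fun e => (splitF f u v w e : ℝ))
      = dot a (fun e => (f e : ℝ)) - ev a u v - ev a u w + ev a v w := by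
  have h1 : 1 ≤ f (mkE u v huv) := by rw [← em_ne f huv]; exact hem1
  have h2 : 1 ≤ f (mkE u w huw) := by rw [← em_ne f huw]; exact hem2
  have hne1 := mkE_uv_ne_uw huv huw hvw
  have hne2 := mkE_uv_ne_vw huv huw hvw
  have hne3 := mkE_uw_ne_vw huv huw hvw
  have hpt : ∀ e : Edge n, ((splitF f u v w e : ℕ) : ℝ)
      = (f e : ℝ) - (if e = mkE u v huv then (1:ℝ) else 0)
        - (if e = mkE u w huw then (1:ℝ) else 0)
        + (if e = mkE v w hvw then (1:ℝ) else 0) := by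
    intro e
    rw [splitF_apply f huv huw hvw]
    by_cases e1 : e = mkE u v huv
    · subst e1
      rw [if_pos rfl, if_pos rfl, if_neg hne1, if_neg hne2]
      push_cast [h1]
      ring
    · rw [if_neg e1, if_neg e1]
      by_cases e2 : e = mkE u w huw
      · subst e2
        rw [if_pos rfl, if_pos rfl, if_neg hne3]
        push_cast [h2]
        ring
      · rw [if_neg e2, if_neg e2]
        by_cases e3 : e = mkE v w hvw
        · subst e3
          rw [if_pos rfl, if_pos rfl]
          push_cast
          ring
        · rw [if_neg e3, if_neg e3]
          ring
  unfold dot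
  simp only [hpt]
  simp only [mul_sub, mul_add, Finset.sum_sub_distrib, Finset.sum_add_distrib,
    mul_ite, mul_one, mul_zero]
  rw [Finset.sum_ite_eq' Finset.univ (mkE u v huv) a,
      Finset.sum_ite_eq' Finset.univ (mkE u w huw) a,
      Finset.sum_ite_eq' Finset.univ (mkE v w hvw) a]
  simp only [Finset.mem_univ, if_pos]
  rw [ev_ne a huv, ev_ne a huw, ev_ne a hvw]

end
end AuxStmt0B
section AuxStmt0C
variable {n : ℕ}
noncomputable section

/-! ### Reducing a multiplicity by two -/

def sub2F (f : Edge n → ℕ) (e0 : Edge n) : Edge n → ℕ := fun e => if e = e0 then f e - 2 else f e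

lemma em_sub2F_pos_iff (f : Edge n → ℕ) {e0 : Edge n} (h3 : 3 ≤ f e0) (p q : Fin n) :
    0 < em (sub2F f e0) p q ↔ 0 < em f p q := by
  rcases eq_or_ne p q with rfl | hpq
  · simp
  · rw [em_ne _ hpq, em_ne f hpq, sub2F]
    split
    · next h => rw [h]; omega
    · rfl

lemma degN_sub2F (f : Edge n → ℕ) {e0 : Edge n} (h3 : 3 ≤ f e0) (p : Fin n) :
    degN (sub2F f e0) p + (if p ∈ e0.val then 2 else 0) = degN f p := by
  rw [degN_eq_degreeE, degN_eq_degreeE,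
    ← Finset.add_sum_erase _ _ (Finset.mem_univ e0),
    ← Finset.add_sum_erase _ (fun e => if p ∈ e.val then f e else 0) (Finset.mem_univ e0)]
  have hrest : ∑ e ∈ Finset.univ.erase e0, (if p ∈ e.val then sub2F f e0 e else 0)
      = ∑ e ∈ Finset.univ.erase e0, (if p ∈ e.val then f e else 0) := by
    apply Finset.sum_congr rfl
    intro e he
    rw [sub2F, if_neg (Finset.mem_erase.mp he).1]
  rw [hrest, sub2F, if_pos rfl]
  by_cases hp : p ∈ e0.val
  · simp only [if_pos hp]; omega
  · simp only [if_neg hp]; omega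

lemma sum_sub2F (f : Edge n → ℕ) {e0 : Edge n} (h3 : 3 ≤ f e0) :
    (∑ e, sub2F f e0 e) + 2 = ∑ e, f e := by
  rw [← Finset.add_sum_erase _ _ (Finset.mem_univ e0),
      ← Finset.add_sum_erase _ f (Finset.mem_univ e0)]
  have hrest : ∑ e ∈ Finset.univ.erase e0, sub2F f e0 e = ∑ e ∈ Finset.univ.erase e0, f e := by
    apply Finset.sum_congr rfl
    intro e he
    rw [sub2F, if_neg (Finset.mem_erase.mp he).1]
  rw [hrest, sub2F, if_pos rfl]
  omega

lemma dot_sub2F (a : Edge n → ℝ) (f : Edge n → ℕ) {e0 : Edge n} (h3 : 3 ≤ f e0) :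
    dot a (fun e => (sub2F f e0 e : ℝ)) = dot a (fun e => (f e : ℝ)) - 2 * a e0 := by
  have hpt : ∀ e : Edge n, ((sub2F f e0 e : ℕ) : ℝ)
      = (f e : ℝ) - (if e = e0 then (2:ℝ) else 0) := by
    intro e
    rw [sub2F]
    by_cases h : e = e0
    · subst h
      rw [if_pos rfl, if_pos rfl]
      have : 2 ≤ f e := by omega
      push_cast [this]
      ring
    · rw [if_neg h, if_neg h]
      ring
  unfold dot
  simp only [hpt]
  simp only [mul_sub, Finset.sum_sub_distrib, mul_ite, mul_zero]
  rw [Finset.sum_ite_eq' Finset.univ e0 (fun e => a e * 2)]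
  simp only [Finset.mem_univ, if_pos]
  ring

/-! ### Parity of boundary -/

lemma even_sum_sym (f : Edge n → ℕ) (C : Finset (Fin n)) :
    Even (∑ p ∈ C, ∑ q ∈ C, em f p q) := by
  classical
  induction C using Finset.induction_on with
  | empty => simp
  | insert a s ha ih =>
    rw [Finset.sum_insert ha,
      Finset.sum_congr rfl (fun p (_ : p ∈ s) => Finset.sum_insert ha),
      Finset.sum_insert ha, em_self, zero_add, Finset.sum_add_distrib,
      Finset.sum_congr rfl (fun p (_ : p ∈ s) => em_symm f p a)]
    have : ∑ q ∈ s, em f a q + (∑ p ∈ s, em f a p + ∑ p ∈ s, ∑ q ∈ s, em f p q)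
        = 2 * (∑ q ∈ s, em f a q) + ∑ p ∈ s, ∑ q ∈ s, em f p q := by ring
    rw [this]
    exact (even_two_mul _).add ih

lemma even_boundary (f : Edge n → ℕ) (u : Fin n) (C : Finset (Fin n)) (hu : u ∉ C)
    (hclosed : ∀ p ∈ C, ∀ q, q ≠ u → 0 < em f p q → q ∈ C)
    (heven : ∀ p, Even (degN f p)) :
    Even (∑ p ∈ C, em f u p) := by
  have hA : Even (∑ p ∈ C, degN f p) := by
    rw [even_iff_two_dvd]
    apply Finset.dvd_sum
    intro p _
    rw [← even_iff_two_dvd]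
    exact heven p
  have hsplit : ∀ p ∈ C, degN f p = em f p u + ∑ q ∈ C, em f p q := by
    intro p hp
    rw [degN, ← Finset.add_sum_erase _ _ (Finset.mem_univ u)]
    congr 1
    symm
    apply Finset.sum_subset
    · intro q hq
      exact Finset.mem_erase.mpr ⟨fun h => hu (h ▸ hq), Finset.mem_univ q⟩
    · intro q hq hqC
      by_contra hpos
      exact hqC (hclosed p hp q (Finset.mem_erase.mp hq).1 (Nat.pos_of_ne_zero hpos))
  rw [Finset.sum_congr rfl hsplit, Finset.sum_add_distrib] at hA
  have h2 := even_sum_sym f C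
  have h1 : Even (∑ p ∈ C, em f p u) := by
    rcases Nat.even_add.mp hA with h
    exact h.mpr h2
  rw [Finset.sum_congr rfl (fun p (_ : p ∈ C) => em_symm f u p)]
  exact h1

/-! ### The graph with a vertex deleted -/

def Rg (f : Edge n → ℕ) (u : Fin n) : SimpleGraph (Fin n) where
  Adj p q := p ≠ u ∧ q ≠ u ∧ 0 < em f p q
  symm := by
    constructor
    rintro p q ⟨h1, h2, h3⟩
    exact ⟨h2, h1, by rw [em_symm]; exact h3⟩
  loopless := by
    constructor
    rintro p ⟨-, -, h⟩
    simp at h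

lemma not_reach_u {f : Edge n → ℕ} {u p : Fin n} (hp : p ≠ u) :
    ¬ (Rg f u).Reachable p u := by
  intro h
  obtain ⟨w⟩ := h.symm
  cases w with
  | nil => exact hp rfl
  | cons h' _ => exact h'.1 rfl

lemma exists_attach_aux {f : Edge n → ℕ} :
    ∀ (x u : Fin n) (_ : (SG f).Walk x u), x ≠ u →
      ∃ q, (Rg f u).Reachable x q ∧ 0 < em f u q := by
  intro x u w
  induction w with
  | nil => intro hx; exact absurd rfl hx
  | @cons a b c h p ih =>
    intro hx
    rcases eq_or_ne b c with rfl | hy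
    · exact ⟨a, SimpleGraph.Reachable.refl a, by rw [em_symm]; exact SG_adj.mp h⟩
    · obtain ⟨q, hq1, hq2⟩ := ih hy
      have hadj : (Rg f c).Adj a b := ⟨hx, hy, SG_adj.mp h⟩
      exact ⟨q, hadj.reachable.trans hq1, hq2⟩

lemma exists_attach {f : Edge n → ℕ} {u p : Fin n} (hp : p ≠ u)
    (hr : (SG f).Reachable p u) :
    ∃ q, (Rg f u).Reachable p q ∧ 0 < em f u q := by
  obtain ⟨w⟩ := hr
  exact exists_attach_aux p u w hp

end
end AuxStmt0C
section AuxStmt0D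
variable {n : ℕ}
noncomputable section

lemma split_lemma (hn : 5 ≤ n) (f : Edge n → ℕ) (hconn : (SG f).Connected)
    (heven : ∀ p, Even (degN f p)) (hpos : ∀ p, 0 < degN f p)
    (u v0 w0 : Fin n) (hdeg : 4 ≤ degN f u)
    (hv0 : 0 < em f u v0) (hw0 : 0 < em f u w0) (hvw0 : v0 ≠ w0) :
    ∃ g : Edge n → ℕ, (SG g).Connected ∧ (∀ p, Even (degN g p)) ∧ (∀ p, 0 < degN g p) ∧
      (∑ e, g e) + 1 = ∑ e, f e ∧
      ∀ a : Edge n → ℝ, IsMetric a →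
        dot a (fun e => (g e : ℝ)) ≤ dot a (fun e => (f e : ℝ)) := by
  classical
  obtain ⟨v, w, hv, hw, hvw, hkey⟩ :
      ∃ v w, 0 < em f u v ∧ 0 < em f u w ∧ v ≠ w ∧
        (¬ (Rg f u).Reachable v w ∨
         ∀ z, 0 < em f u z → (Rg f u).Reachable v z) := by
    by_cases hsep : ∃ v w, 0 < em f u v ∧ 0 < em f u w ∧ ¬ (Rg f u).Reachable v w
    · obtain ⟨v, w, h1, h2, h3⟩ := hsep
      have hne : v ≠ w := by rintro rfl; exact h3 (SimpleGraph.Reachable.refl v)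
      exact ⟨v, w, h1, h2, hne, Or.inl h3⟩
    · push_neg at hsep
      exact ⟨v0, w0, hv0, hw0, hvw0, Or.inr (fun z hz => hsep v0 z hv0 hz)⟩
  have huv : u ≠ v := em_pos_ne hv
  have huw : u ≠ w := em_pos_ne hw
  refine ⟨splitF f u v w, ?_, ?_, ?_, sum_splitF f huv huw hvw hv hw, ?_⟩
  · -- connectivity
    have hreach_u : ∀ p, (SG (splitF f u v w)).Reachable p u := by
      intro p
      rcases eq_or_ne p u with rfl | hp
      · exact SimpleGraph.Reachable.refl _
      set C : Finset (Fin n) := Finset.univ.filter (fun q => (Rg f u).Reachable p q) with hC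
      have hmemC : ∀ q, q ∈ C ↔ (Rg f u).Reachable p q := by
        intro q; simp [hC]
      have huC : u ∉ C := fun h => not_reach_u hp ((hmemC u).mp h)
      have hclosed : ∀ x ∈ C, ∀ q, q ≠ u → 0 < em f x q → q ∈ C := by
        intro x hx q hq hposq
        have hx' := (hmemC x).mp hx
        have hxu : x ≠ u := fun h => huC (h ▸ hx)
        exact (hmemC q).mpr (hx'.trans (SimpleGraph.Adj.reachable ⟨hxu, hq, hposq⟩))
      have hEvenM : Even (∑ q ∈ C, em f u q) := even_boundary f u C huC hclosed heven
      have hM1 : 0 < ∑ q ∈ C, em f u q := by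
        obtain ⟨q0, hq0r, hq0⟩ := exists_attach hp (hconn.preconnected p u)
        have hq0C : q0 ∈ C := (hmemC q0).mpr hq0r
        exact lt_of_lt_of_le hq0 (Finset.single_le_sum (fun _ _ => Nat.zero_le _) hq0C)
      have hQ1 : ∃ q ∈ C, 0 < em (splitF f u v w) u q := by
        by_contra hno
        push_neg at hno
        have hpt : ∀ q ∈ C, em f u q = (if q = v then 1 else 0) + (if q = w then 1 else 0) := by
          intro q hq
          have h0 : em (splitF f u v w) u q = 0 := Nat.le_zero.mp (hno q hq)
          by_cases h1 : q = v
          · subst h1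
            rw [em_splitF_uv f huv huw hvw] at h0
            rw [if_pos rfl, if_neg hvw]
            omega
          · by_cases h2 : q = w
            · subst h2
              rw [em_splitF_uw f huv huw hvw] at h0
              rw [if_neg h1, if_pos rfl]
              omega
            · rw [if_neg h1, if_neg h2]
              rw [em_splitF_other f huv huw hvw] at h0
              · exact h0
              · intro hc
                rcases Sym2.eq_iff.mp hc with ⟨-, h'⟩ | ⟨h', -⟩
                · exact h1 h'
                · exact huv h'
              · intro hc
                rcases Sym2.eq_iff.mp hc with ⟨-, h'⟩ | ⟨h', -⟩
                · exact h2 h'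
                · exact huw h'
              · intro hc
                rcases Sym2.eq_iff.mp hc with ⟨h', -⟩ | ⟨h', -⟩
                · exact huv h'
                · exact huw h'
        have hform : ∑ q ∈ C, em f u q
            = (if v ∈ C then 1 else 0) + (if w ∈ C then 1 else 0) := by
          rw [Finset.sum_congr rfl hpt, Finset.sum_add_distrib,
            Finset.sum_ite_eq' C v (fun _ => 1), Finset.sum_ite_eq' C w (fun _ => 1)]
        rw [Nat.even_iff] at hEvenM
        have hvC : v ∈ C := by
          by_contra h1
          rw [if_neg h1] at hform
          by_cases h2 : w ∈ C
          · rw [if_pos h2] at hform; omega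
          · rw [if_neg h2] at hform; omega
        have hwC : w ∈ C := by
          by_contra h2
          rw [if_pos hvC, if_neg h2] at hform
          omega
        rcases hkey with hnr | hall
        · exact hnr (((hmemC v).mp hvC).symm.trans ((hmemC w).mp hwC))
        · have hMall : degN f u = ∑ q ∈ C, em f u q := by
            rw [degN]
            symm
            apply Finset.sum_subset (Finset.subset_univ C)
            intro q _ hqC
            by_contra hposq
            have hr : (Rg f u).Reachable v q := hall q (Nat.pos_of_ne_zero hposq)
            exact hqC ((hmemC q).mpr (((hmemC v).mp hvC).trans hr))
          rw [if_pos hvC, if_pos hwC] at hform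
          omega
      obtain ⟨q1, hq1C, hq1⟩ := hQ1
      have hlift : ∀ x y, (Rg f u).Adj x y → (SG (splitF f u v w)).Reachable x y := by
        rintro x y ⟨hxu, hyu, hxy⟩
        apply SimpleGraph.Adj.reachable
        rw [SG_adj]
        exact lt_of_lt_of_le hxy (em_splitF_offu f huv huw hvw hxu hyu)
      have h1 : (SG (splitF f u v w)).Reachable p q1 := reach_lift hlift ((hmemC q1).mp hq1C)
      have h2 : (SG (splitF f u v w)).Adj q1 u := SG_adj.mpr (by rw [em_symm]; exact hq1)
      exact h1.trans h2.reachable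
    rw [SimpleGraph.connected_iff]
    exact ⟨fun p q => (hreach_u p).trans (hreach_u q).symm, ⟨⟨0, by omega⟩⟩⟩
  · -- degrees even
    intro p
    rcases eq_or_ne p u with rfl | hpu
    · have h := degN_splitF_u f huv huw hvw hv hw
      obtain ⟨r, hr⟩ := heven p
      exact ⟨r - 1, by omega⟩
    rcases eq_or_ne p v with rfl | hpv
    · rw [degN_splitF_v f huv huw hvw hv]; exact heven p
    rcases eq_or_ne p w with rfl | hpw
    · rw [degN_splitF_w f huv huw hvw hw]; exact heven p
    · rw [degN_splitF_other f huv huw hvw hpu hpv hpw]; exact heven p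
  · -- degrees positive
    intro p
    rcases eq_or_ne p u with rfl | hpu
    · have h := degN_splitF_u f huv huw hvw hv hw
      omega
    rcases eq_or_ne p v with rfl | hpv
    · rw [degN_splitF_v f huv huw hvw hv]; exact hpos p
    rcases eq_or_ne p w with rfl | hpw
    · rw [degN_splitF_w f huv huw hvw hw]; exact hpos p
    · rw [degN_splitF_other f huv huw hvw hpu hpv hpw]; exact hpos p
  · -- dot inequality
    intro a hmet
    rw [dot_splitF a f huv huw hvw hv hw]
    have ht := hmet u v w ⟨hvw, huv, huw⟩
    rw [tri] at ht
    have := ev_symm a v u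
    linarith

end
end AuxStmt0D
section AuxStmt0E
variable {n : ℕ}
noncomputable section

lemma two_nbrs (f : Edge n → ℕ) (hle1 : ∀ e, f e ≤ 1) (hdeg : ∀ p, degN f p = 2) (c : Fin n) :
    ∃ x y : Fin n, x ≠ y ∧ ∀ z, 0 < em f c z ↔ (z = x ∨ z = y) := by
  classical
  have hle : ∀ z, em f c z ≤ 1 := by
    intro z
    rcases eq_or_ne c z with rfl | h
    · simp
    · rw [em_ne f h]; exact hle1 _
  have hcard : (Finset.univ.filter (fun z => 0 < em f c z)).card = 2 := by
    have hpt : ∀ z, em f c z = if 0 < em f c z then 1 else 0 := by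
      intro z
      have := hle z
      by_cases hz : 0 < em f c z
      · rw [if_pos hz]; omega
      · rw [if_neg hz]; omega
    have h2 := hdeg c
    rw [degN, Finset.sum_congr rfl (fun z _ => hpt z), Finset.sum_boole] at h2
    exact_mod_cast h2
  obtain ⟨x, y, hxy, hset⟩ := Finset.card_eq_two.mp hcard
  refine ⟨x, y, hxy, fun z => ?_⟩
  constructor
  · intro hz
    have hzm : z ∈ Finset.univ.filter (fun z => 0 < em f c z) :=
      Finset.mem_filter.mpr ⟨Finset.mem_univ z, hz⟩
    rw [hset] at hzm
    simpa using hzm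
  · intro hz
    have hzm : z ∈ ({x, y} : Finset (Fin n)) := by simpa using hz
    rw [← hset] at hzm
    exact (Finset.mem_filter.mp hzm).2

lemma base_case (hn : 5 ≤ n) (f : Edge n → ℕ) (hconn : (SG f).Connected)
    (hle1 : ∀ e, f e ≤ 1) (hdeg : ∀ p, degN f p = 2) :
    ∃ σ : Equiv.Perm (Fin n), (fun e => (f e : ℝ)) = hamVec σ := by
  classical
  choose nb1 nb2 hne12 hmem using two_nbrs f hle1 hdeg
  have hn0 : 0 < n := by omega
  set x0 : Fin n := ⟨0, hn0⟩ with hx0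
  set step : Fin n × Fin n → Fin n × Fin n :=
    fun pc => (pc.2, if pc.1 = nb1 pc.2 then nb2 pc.2 else nb1 pc.2) with hstep
  set g : ℕ → Fin n := fun k => (step^[k] (x0, nb1 x0)).1 with hgdef
  have hpair : ∀ k, (step^[k] (x0, nb1 x0)).2 = g (k+1) := by
    intro k
    rw [hgdef]
    simp only [Function.iterate_succ_apply']
    rfl
  have hinv : ∀ k, (step^[k] (x0, nb1 x0)).2 = nb1 ((step^[k] (x0, nb1 x0)).1)
      ∨ (step^[k] (x0, nb1 x0)).2 = nb2 ((step^[k] (x0, nb1 x0)).1) := by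
    intro k
    induction k with
    | zero => left; rfl
    | succ k ih =>
      rw [Function.iterate_succ_apply']
      by_cases hc : (step^[k] (x0, nb1 x0)).1 = nb1 ((step^[k] (x0, nb1 x0)).2)
      · right
        show (if _ = nb1 _ then nb2 _ else nb1 _) = _
        rw [if_pos hc]
      · left
        show (if _ = nb1 _ then nb2 _ else nb1 _) = _
        rw [if_neg hc]
  have hadj : ∀ k, 0 < em f (g k) (g (k+1)) := by
    intro k
    rw [← hpair k]
    rcases hinv k with h | h
    · exact (hmem (g k) _).mpr (Or.inl (by rw [h]))
    · exact (hmem (g k) _).mpr (Or.inr (by rw [h]))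
  have hstep2 : ∀ k, g (k+2) = if g k = nb1 (g (k+1)) then nb2 (g (k+1)) else nb1 (g (k+1)) := by
    intro k
    rw [← hpair (k+1), Function.iterate_succ_apply']
    show (if (step^[k] (x0, nb1 x0)).1 = nb1 ((step^[k] (x0, nb1 x0)).2) then _ else _) = _
    rw [hpair k]
  have hnoback : ∀ k, g (k+2) ≠ g k := by
    intro k
    rw [hstep2 k]
    by_cases hc : g k = nb1 (g (k+1))
    · rw [if_pos hc, hc]
      exact (hne12 (g (k+1))).symm
    · rw [if_neg hc]
      exact fun h => hc h.symm
  have hQ : ∀ c z1 z2 z, z1 ≠ z2 → 0 < em f c z1 → 0 < em f c z2 → 0 < em f c z →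
      z = z1 ∨ z = z2 := by
    intro c z1 z2 z h12 h1 h2 hz
    rcases (hmem c z1).mp h1 with rfl | rfl <;>
      rcases (hmem c z2).mp h2 with rfl | rfl <;>
        rcases (hmem c z).mp hz with rfl | rfl <;> tauto
  have hnbr2 : ∀ k q, 0 < em f (g (k+1)) q → q = g k ∨ q = g (k+2) := by
    intro k q hq
    apply hQ (g (k+1)) (g k) (g (k+2)) q
    · exact fun h => hnoback k (h.symm)
    · rw [em_symm]; exact hadj k
    · exact hadj (k+1)
    · exact hq
  have hinj : ∀ j, j < n → ∀ i, i < j → g i ≠ g j := by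
    intro j
    induction j using Nat.strong_induction_on with
    | _ j ih =>
    intro hjn i hij heq
    rcases Nat.eq_zero_or_pos i with rfl | hi0
    · rcases (by omega : j = 1 ∨ j = 2 ∨ 3 ≤ j) with rfl | rfl | hj3
      · exact em_pos_ne (hadj 0) heq
      · exact hnoback 0 heq.symm
      · set S : Finset (Fin n) := (Finset.range j).image g with hS
        have hgmem : ∀ k, k < j → g k ∈ S :=
          fun k hk => Finset.mem_image.mpr ⟨k, Finset.mem_range.mpr hk, rfl⟩
        have hclosed : ∀ p ∈ (↑S : Set (Fin n)), ∀ q, (SG f).Adj p q → q ∈ (↑S : Set (Fin n)) := by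
          intro p hp q hq
          obtain ⟨k, hk, rfl⟩ := Finset.mem_image.mp (by exact_mod_cast hp)
          rw [Finset.mem_range] at hk
          have hq' : 0 < em f (g k) q := SG_adj.mp hq
          rcases Nat.eq_zero_or_pos k with rfl | hk0
          · have h1 : 0 < em f (g 0) (g 1) := hadj 0
            have h2 : 0 < em f (g 0) (g (j-1)) := by
              have h := hadj (j-1)
              rw [show j - 1 + 1 = j by omega] at h
              rw [heq, em_symm]
              exact h
            have hne' : g 1 ≠ g (j-1) := ih (j-1) (by omega) (by omega) 1 (by omega)
            rcases hQ (g 0) (g 1) (g (j-1)) q hne' h1 h2 hq' with rfl | rfl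
            · exact_mod_cast hgmem 1 (by omega)
            · exact_mod_cast hgmem (j-1) (by omega)
          · obtain ⟨k', rfl⟩ : ∃ k', k = k' + 1 := ⟨k - 1, by omega⟩
            rcases hnbr2 k' q hq' with rfl | rfl
            · exact_mod_cast hgmem k' (by omega)
            · rcases (by omega : k' + 2 < j ∨ k' + 2 = j) with h | h
              · exact_mod_cast hgmem _ h
              · rw [h, ← heq]
                exact_mod_cast hgmem 0 (by omega)
        have huniv : ∀ z, z ∈ S := by
          intro z
          have hr := hconn.preconnected (g 0) z
          have hz := reach_closure hclosed hr (by exact_mod_cast hgmem 0 (by omega))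
          exact_mod_cast hz
        have hcard1 : (n : ℕ) ≤ S.card := by
          have hsub : Finset.univ ⊆ S := fun z _ => huniv z
          have := Finset.card_le_card hsub
          simpa using this
        have hcard2 : S.card ≤ j := le_trans Finset.card_image_le (by simp)
        omega
    · obtain ⟨i', rfl⟩ : ∃ i', i = i' + 1 := ⟨i - 1, by omega⟩
      obtain ⟨j', rfl⟩ : ∃ j', j = j' + 1 := ⟨j - 1, by omega⟩
      have hq' : 0 < em f (g (i'+1)) (g j') := by
        rw [heq, em_symm]
        exact hadj j'
      rcases hnbr2 i' (g j') hq' with h | h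
      · exact ih j' (by omega) (by omega) i' (by omega) h.symm
      · rcases (by omega : i' + 2 < j' ∨ i' + 2 = j' ∨ j' ≤ i' + 1) with hlt | heq2 | hle
        · exact ih j' (by omega) (by omega) (i'+2) hlt h.symm
        · refine hnoback (i'+1) ?_
          rw [show i'+1+2 = j'+1 by omega, ← heq]
        · have hji : j' = i' + 1 := by omega
          refine em_pos_ne (hadj (i'+1)) ?_
          rw [show i'+1+1 = i'+2 by omega, ← h, hji]
  have hinjOn : ∀ i1 i2, i1 < n → i2 < n → g i1 = g i2 → i1 = i2 := by
    intro i1 i2 h1 h2 hgeq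
    rcases lt_trichotomy i1 i2 with h | h | h
    · exact absurd hgeq (hinj i2 h2 i1 h)
    · exact h
    · exact absurd hgeq.symm (hinj i1 h1 i2 h)
  have hsurj : ∀ z : Fin n, ∃ i, i < n ∧ g i = z := by
    have hcard : ((Finset.range n).image g).card = n := by
      rw [Finset.card_image_of_injOn, Finset.card_range]
      intro a ha b hb hab
      exact hinjOn a b (Finset.mem_range.mp ha) (Finset.mem_range.mp hb) hab
    have huniv : (Finset.range n).image g = Finset.univ :=
      Finset.eq_univ_of_card _ (by rw [hcard, Fintype.card_fin])
    intro z
    have hz : z ∈ (Finset.range n).image g := huniv ▸ Finset.mem_univ z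
    obtain ⟨i, hi, hgi⟩ := Finset.mem_image.mp hz
    exact ⟨i, Finset.mem_range.mp hi, hgi⟩
  have hclose : g n = g 0 := by
    obtain ⟨i, hin, hgi⟩ := hsurj (g n)
    rcases Nat.eq_zero_or_pos i with rfl | hi0
    · exact hgi.symm
    · exfalso
      obtain ⟨i', rfl⟩ : ∃ i', i = i' + 1 := ⟨i - 1, by omega⟩
      have hq' : 0 < em f (g (i'+1)) (g (n-1)) := by
        rw [hgi, em_symm]
        have h := hadj (n-1)
        rw [show n-1+1 = n by omega] at h
        exact h
      rcases hnbr2 i' (g (n-1)) hq' with h | h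
      · have : n - 1 = i' := hinjOn (n-1) i' (by omega) (by omega) h
        omega
      · rcases (by omega : i'+2 < n ∨ i'+2 = n) with hlt | heq2
        · have he : n - 1 = i' + 2 := hinjOn (n-1) (i'+2) (by omega) hlt h
          refine hnoback (n-2) ?_
          rw [show n-2+2 = n by omega, show n-2 = i'+1 by omega]
          exact hgi.symm
        · refine em_pos_ne (hadj (n-1)) ?_
          rw [show n-1+1 = n by omega, h, heq2]
  have h0nbr : ∀ q, 0 < em f (g 0) q → q = g 1 ∨ q = g (n-1) := by
    intro q hq
    apply hQ (g 0) (g 1) (g (n-1)) q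
    · exact fun h => hinj (n-1) (by omega) 1 (by omega) h
    · exact hadj 0
    · have h := hadj (n-1)
      rw [show n-1+1 = n by omega, hclose] at h
      rw [em_symm]
      exact h
    · exact hq
  have hinjF : Function.Injective (fun i : Fin n => g i.val) := by
    intro i j h
    exact Fin.ext (hinjOn i.val j.val i.isLt j.isLt h)
  set σ : Equiv.Perm (Fin n) :=
    Equiv.ofBijective _ (Finite.injective_iff_bijective.mp hinjF) with hσ
  have hσ_apply : ∀ i : Fin n, σ i = g i.val := fun i => rfl
  have hσ_next : ∀ i : Fin n, σ (nextF i) = g (i.val + 1) := by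
    intro i
    rw [hσ_apply]
    show g ((i.val + 1) % n) = g (i.val + 1)
    have hilt := i.isLt
    rcases (by omega : i.val + 1 < n ∨ i.val + 1 = n) with h | h
    · rw [Nat.mod_eq_of_lt h]
    · rw [h, Nat.mod_self]
      exact hclose.symm
  refine ⟨σ, funext fun e => ?_⟩
  simp only [hamVec]
  by_cases hex : ∃ i : Fin n, e.val = s(σ i, σ (nextF i))
  · rw [if_pos hex]
    obtain ⟨i, hi⟩ := hex
    rw [hσ_apply, hσ_next] at hi
    have hne' : g i.val ≠ g (i.val + 1) := em_pos_ne (hadj i.val)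
    have he : e = mkE _ _ hne' := Subtype.ext hi
    have hpos := hadj i.val
    rw [em_ne f hne'] at hpos
    have hle := hle1 (mkE _ _ hne')
    have hfe : f e = 1 := by rw [he]; omega
    rw [hfe]
    norm_num
  · rw [if_neg hex]
    by_contra hne0
    have hfe : 0 < f e := Nat.pos_of_ne_zero (fun h => hne0 (by rw [h]; norm_num))
    obtain ⟨p, q, hpq, rfl⟩ := edge_cases e
    have hpos : 0 < em f p q := by rw [em_ne f hpq]; exact hfe
    obtain ⟨i, hin, rfl⟩ := hsurj p
    apply hex
    rcases Nat.eq_zero_or_pos i with rfl | hi0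
    · rcases h0nbr q hpos with rfl | rfl
      · refine ⟨⟨0, by omega⟩, ?_⟩
        rw [hσ_apply, hσ_next]
        rfl
      · refine ⟨⟨n-1, by omega⟩, ?_⟩
        rw [hσ_apply, hσ_next]
        show s(g 0, g (n-1)) = s(g (n-1), g (n-1+1))
        rw [show n-1+1 = n by omega, hclose]
        exact Sym2.eq_swap
    · obtain ⟨i', rfl⟩ : ∃ i', i = i' + 1 := ⟨i - 1, by omega⟩
      rcases hnbr2 i' q hpos with rfl | rfl
      · refine ⟨⟨i', by omega⟩, ?_⟩
        rw [hσ_apply, hσ_next]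
        exact Sym2.eq_swap
      · refine ⟨⟨i'+1, hin⟩, ?_⟩
        rw [hσ_apply, hσ_next]
        rfl

end
end AuxStmt0E
section AuxStmt0F
variable {n : ℕ}
noncomputable section

lemma main_bound (hn : 5 ≤ n) (a : Edge n → ℝ) (α : ℝ) (hmet : IsMetric a)
    (hvalid : ∀ σ : Equiv.Perm (Fin n), α ≤ dot a (hamVec σ)) :
    ∀ (N : ℕ) (f : Edge n → ℕ), (∑ e, f e) = N → (SG f).Connected →
      (∀ p, Even (degN f p)) → (∀ p, 0 < degN f p) →
      α ≤ dot a (fun e => (f e : ℝ)) := by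
  intro N
  induction N using Nat.strong_induction_on with
  | _ N ih =>
  intro f hNf hconn heven hpos
  by_cases h3 : ∃ e0, 3 ≤ f e0
  · obtain ⟨e0, he0⟩ := h3
    have hadj2 : ∀ p q, (SG f).Adj p q → (SG (sub2F f e0)).Adj p q := fun p q h =>
      SG_adj.mpr ((em_sub2F_pos_iff f he0 p q).mpr (SG_adj.mp h))
    have hconn' : (SG (sub2F f e0)).Connected := by
      rw [SimpleGraph.connected_iff]
      exact ⟨fun p q => reach_lift (fun x y h => (hadj2 x y h).reachable)
        (hconn.preconnected p q), ⟨⟨0, by omega⟩⟩⟩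
    have hb : ∀ p, p ∈ e0.val → 3 ≤ degN f p := by
      intro p hp
      rw [degN_eq_degreeE]
      calc (3:ℕ) ≤ f e0 := he0
        _ = (if p ∈ e0.val then f e0 else 0) := by rw [if_pos hp]
        _ ≤ ∑ e : Edge n, (if p ∈ e.val then f e else 0) :=
            Finset.single_le_sum (f := fun e : Edge n => if p ∈ e.val then f e else 0)
              (fun e _ => Nat.zero_le _) (Finset.mem_univ e0)
    have heven' : ∀ p, Even (degN (sub2F f e0) p) := by
      intro p
      have hd := degN_sub2F f he0 p
      have he := heven p
      rw [Nat.even_iff] at he ⊢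
      by_cases hp : p ∈ e0.val
      · rw [if_pos hp] at hd; omega
      · rw [if_neg hp] at hd; omega
    have hpos' : ∀ p, 0 < degN (sub2F f e0) p := by
      intro p
      have hd := degN_sub2F f he0 p
      by_cases hp : p ∈ e0.val
      · have := hb p hp; rw [if_pos hp] at hd; omega
      · have := hpos p; rw [if_neg hp] at hd; omega
    have hsum := sum_sub2F f he0
    have hrec := ih (∑ e, sub2F f e0 e) (by omega) (sub2F f e0) rfl hconn' heven' hpos'
    rw [dot_sub2F a f he0] at hrec
    have ha0 := a_nonneg hn hmet e0
    linarith
  · push_neg at h3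
    by_cases h4 : ∃ u, 4 ≤ degN f u
    · obtain ⟨u, hu⟩ := h4
      have hvex : ∃ v, 0 < em f u v := by
        by_contra hno
        push_neg at hno
        have hz : degN f u = 0 :=
          Finset.sum_eq_zero (fun v _ => Nat.le_zero.mp (hno v))
        omega
      obtain ⟨v0, hv0⟩ := hvex
      have hwex : ∃ w, w ≠ v0 ∧ 0 < em f u w := by
        by_contra hno
        push_neg at hno
        have hsingle : degN f u = em f u v0 := by
          rw [degN]
          exact Finset.sum_eq_single v0
            (fun w _ hw => Nat.le_zero.mp (hno w hw))
            (fun h => absurd (Finset.mem_univ v0) h)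
        have hle2 : em f u v0 ≤ 2 := by
          rw [em_ne f (em_pos_ne hv0)]
          have := h3 (mkE u v0 (em_pos_ne hv0))
          omega
        omega
      obtain ⟨w0, hw0ne, hw0⟩ := hwex
      obtain ⟨g, hgconn, hgeven, hgpos, hgsum, hgdot⟩ :=
        split_lemma hn f hconn heven hpos u v0 w0 hu hv0 hw0 (Ne.symm hw0ne)
      have hrec := ih (∑ e, g e) (by omega) g rfl hgconn hgeven hgpos
      exact le_trans hrec (hgdot a hmet)
    · push_neg at h4
      have hdeg2 : ∀ p, degN f p = 2 := by
        intro p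
        have h1 := heven p
        rw [Nat.even_iff] at h1
        have h2 := hpos p
        have h3' := h4 p
        omega
      by_cases h2 : ∃ e0, f e0 = 2
      · exfalso
        obtain ⟨e0, he2⟩ := h2
        obtain ⟨x, y, hxy, rfl⟩ := edge_cases e0
        have hexy : em f x y = 2 := by rw [em_ne f hxy]; exact he2
        have honly : ∀ (p q r : Fin n), em f p q = 2 → 0 < em f p r → r = q := by
          intro p q r hp2 hr
          by_contra hrq
          have hbig : 2 + 1 ≤ degN f p := by
            rw [degN, ← Finset.add_sum_erase _ _ (Finset.mem_univ q)]
            have hrm : r ∈ Finset.univ.erase q :=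
              Finset.mem_erase.mpr ⟨hrq, Finset.mem_univ r⟩
            have : 1 ≤ ∑ q' ∈ Finset.univ.erase q, em f p q' :=
              le_trans hr (Finset.single_le_sum (fun _ _ => Nat.zero_le _) hrm)
            omega
          rw [hdeg2 p] at hbig
          omega
        have hclosed : ∀ p ∈ ({x, y} : Set (Fin n)), ∀ q, (SG f).Adj p q →
            q ∈ ({x, y} : Set (Fin n)) := by
          intro p hp q hq
          rcases hp with rfl | hp
          · exact Or.inr (by
              rw [Set.mem_singleton_iff]
              exact honly p y q hexy (SG_adj.mp hq))
          · rw [Set.mem_singleton_iff] at hp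
            subst hp
            exact Or.inl (honly p x q (by rw [em_symm]; exact hexy) (SG_adj.mp hq))
        obtain ⟨z, hzx, hzy⟩ := exists_third hn x y
        have hz := reach_closure hclosed (hconn.preconnected x z) (Or.inl rfl)
        rcases hz with h | h
        · exact hzx h
        · exact hzy (Set.mem_singleton_iff.mp h)
      · have hle1 : ∀ e, f e ≤ 1 := by
          intro e
          have h1 := h3 e
          have h2' : f e ≠ 2 := fun h => h2 ⟨e, h⟩
          omega
        obtain ⟨σ, hσ⟩ := base_case hn f hconn hle1 hdeg2
        rw [hσ]
        exact hvalid σ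

end
end AuxStmt0F
/-- a metric inequality valid for `S` is valid for `P`. -/
theorem stmt0 (n : ℕ) (hn : 5 ≤ n) (a : Edge n → ℝ) (α : ℝ)
    (hmet : IsMetric a)
    (hvalid : ∀ σ : Equiv.Perm (Fin n), α ≤ dot a (hamVec σ)) :
    ∀ x ∈ gtsp n, α ≤ dot a x := by
  have hconv : Convex ℝ {x : Edge n → ℝ | α ≤ dot a x} := by
    apply convex_halfSpace_ge
    constructor
    · intro x y
      simp [dot, mul_add, Finset.sum_add_distrib]
    · intro c x
      simp only [dot, Pi.smul_apply, smul_eq_mul, Finset.mul_sum]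
      exact Finset.sum_congr rfl (fun e _ => by ring)
  have hsub : {x : Edge n → ℝ | IsEulerian x} ⊆ {x | α ≤ dot a x} := by
    intro x hx
    obtain ⟨hint, hconn, hdeg⟩ := hx
    choose F hF using hint
    have hxF : x = fun e => (F e : ℝ) := funext hF
    rw [hxF] at hconn hdeg ⊢
    have hconn' : (SG F).Connected := hconn
    have hdegN : ∀ u, ∃ m : ℕ, 0 < m ∧ degN F u = 2 * m := by
      intro u
      obtain ⟨m, hm, hdm⟩ := hdeg u
      refine ⟨m, hm, ?_⟩
      rw [degree_cast] at hdm
      exact_mod_cast hdm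
    have heven : ∀ p, Even (degN F p) := by
      intro p
      obtain ⟨m, -, hm⟩ := hdegN p
      exact ⟨m, by omega⟩
    have hpos : ∀ p, 0 < degN F p := by
      intro p
      obtain ⟨m, hm0, hm⟩ := hdegN p
      omega
    exact main_bound hn a α hmet hvalid (∑ e, F e) F rfl hconn' heven hpos
  intro x hx
  exact convexHull_min hsub hconv hx

end TSP
end

section
/- If the inequality a·x ≥ α is valid for the graphical traveling salesman polyhedron P and the face F = {x ∈ P : a·x = α} it defines is nonempty and good, then a is metric. -/
open scoped BigOperators

namespace TSP
variable {n : ℕ}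
section Aux
variable {n : ℕ}

/-- Build an edge from two distinct vertices. -/
def mkEdge (u v : Fin n) (h : u ≠ v) : Edge n :=
  ⟨s(u, v), fun hd => h (Sym2.mk_isDiag_iff.mp hd)⟩

lemma ev_eq (a : Edge n → ℝ) (u v : Fin n) (h : u ≠ v) :
    ev a u v = a (mkEdge u v h) := by
  simp [ev, h, mkEdge]

lemma dot_indic (a : Edge n → ℝ) (u v : Fin n) (h : u ≠ v) :
    dot a (indic u v) = ev a u v := by
  rw [ev_eq a u v h]
  unfold dot indic
  rw [Finset.sum_eq_single (mkEdge u v h)]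
  · simp [mkEdge]
  · intro e _ hne
    have : e.val ≠ s(u, v) := fun hval => hne (Subtype.ext hval)
    simp [this]
  · intro h'; exact absurd (Finset.mem_univ _) h'

lemma degree_indic (u v t : Fin n) (h : u ≠ v) :
    degree (indic u v) t = if t ∈ s(u, v) then (1 : ℝ) else 0 := by
  unfold degree indic
  rw [Finset.sum_eq_single (mkEdge u v h)]
  · simp [mkEdge]
  · intro e _ hne
    have : e.val ≠ s(u, v) := fun hval => hne (Subtype.ext hval)
    simp [this]
  · intro h'; exact absurd (Finset.mem_univ _) h'

lemma dot_sum_smul (a : Edge n → ℝ) {ι : Type} (t : Finset ι) (w : ι → ℝ)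
    (z : ι → Edge n → ℝ) :
    dot a (∑ i ∈ t, w i • z i) = ∑ i ∈ t, w i * dot a (z i) := by
  unfold dot
  simp only [Finset.sum_apply, Pi.smul_apply, smul_eq_mul, Finset.mul_sum]
  rw [Finset.sum_comm]
  exact Finset.sum_congr rfl fun i _ => Finset.sum_congr rfl fun e _ => by ring

lemma eulerian_mem_gtsp {x : Edge n → ℝ} (hx : IsEulerian x) : x ∈ gtsp n :=
  subset_convexHull ℝ _ hx

lemma eulerian_nonneg {y : Edge n → ℝ} (hy : IsEulerian y) (e : Edge n) :
    0 ≤ y e := by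
  obtain ⟨m, hm⟩ := hy.1 e
  rw [hm]; exact m.cast_nonneg

/-- Extract an Eulerian vertex of the face with positive coordinate at `e₀`. -/
lemma exists_eulerian_on_face (a : Edge n → ℝ) (α : ℝ) (e₀ : Edge n)
    (hvalid : ∀ x ∈ gtsp n, α ≤ dot a x)
    (x : Edge n → ℝ) (hx : x ∈ gtsp n) (hxa : dot a x = α) (hxe : 0 < x e₀) :
    ∃ y, IsEulerian y ∧ dot a y = α ∧ 0 < y e₀ := by
  rw [gtsp, convexHull_eq] at hx
  obtain ⟨ι, t, w, z, hw0, hw1, hz, hcm⟩ := hx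
  rw [Finset.centerMass_eq_of_sum_1 _ _ hw1] at hcm
  have hzg : ∀ i ∈ t, z i ∈ gtsp n := fun i hi => eulerian_mem_gtsp (hz i hi)
  have hda : dot a x = ∑ i ∈ t, w i * dot a (z i) := by
    rw [← hcm, dot_sum_smul]
  have hkey : ∀ i ∈ t, w i * (dot a (z i) - α) = 0 := by
    rw [← Finset.sum_eq_zero_iff_of_nonneg]
    · have : ∑ i ∈ t, w i * (dot a (z i) - α) = dot a x - α := by
        simp only [mul_sub]
        rw [Finset.sum_sub_distrib, ← Finset.sum_mul, hw1, ← hda]; ring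
      rw [this, hxa, sub_self]
    · intro i hi
      exact mul_nonneg (hw0 i hi) (sub_nonneg.mpr (hvalid _ (hzg i hi)))
  have hxe' : x e₀ = ∑ i ∈ t, w i * z i e₀ := by
    rw [← hcm]
    simp [Finset.sum_apply, Pi.smul_apply]
  have : ∃ i ∈ t, 0 < w i * z i e₀ := by
    by_contra hcon
    push_neg at hcon
    have := Finset.sum_nonpos hcon
    rw [← hxe'] at this
    linarith
  obtain ⟨i, hi, hprod⟩ := this
  have hwi : 0 < w i := by
    rcases (hw0 i hi).lt_or_eq with h | h
    · exact h
    · exfalso; rw [← h, zero_mul] at hprod; exact lt_irrefl _ hprod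
  refine ⟨z i, hz i hi, ?_, ?_⟩
  · have := hkey i hi
    have h2 : dot a (z i) - α = 0 := by
      rcases mul_eq_zero.mp this with h | h
      · exact absurd h hwi.ne'
      · exact h
    linarith
  · rcases (eulerian_nonneg (hz i hi) e₀).lt_or_eq with h | h
    · exact h
    · exfalso; rw [← h, mul_zero] at hprod; exact lt_irrefl _ hprod

/-- Preconnectedness transfers along adjacency-to-reachability maps. -/
lemma precon_transfer {V : Type*} {G H : SimpleGraph V}
    (h : ∀ p q, G.Adj p q → H.Reachable p q) (hG : G.Preconnected) :
    H.Preconnected := by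
  intro p q
  obtain ⟨wk⟩ := hG p q
  induction wk with
  | nil => exact SimpleGraph.Reachable.refl _
  | cons hadj _ ih => exact (h _ _ hadj).trans ih

lemma ev_nonneg_of_eulerian {y : Edge n → ℝ} (hy : IsEulerian y) (p q : Fin n) :
    0 ≤ ev y p q := by
  rcases eq_or_ne p q with h | h
  · simp [ev, h]
  · rw [ev_eq y p q h]; exact eulerian_nonneg hy _

/-- Shortcutting: replace one copy of edge `vw` by the path `v-u-w`. -/
lemma shortcut_eulerian (u v w : Fin n) (hvw : v ≠ w) (huv : u ≠ v) (huw : u ≠ w)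
    {y : Edge n → ℝ} (hy : IsEulerian y) (hpos : 0 < y (mkEdge v w hvw)) :
    IsEulerian (fun e => y e + indic v u e + indic u w e - indic v w e) := by
  set y' : Edge n → ℝ := fun e => y e + indic v u e + indic u w e - indic v w e with hy'
  have hvu_uw : s(v, u) ≠ s(u, w) := by
    intro hh; rcases Sym2.eq_iff.mp hh with ⟨h, h'⟩ | ⟨h, h'⟩ <;> simp_all
  have hvu_vw : s(v, u) ≠ s(v, w) := by
    intro hh; rcases Sym2.eq_iff.mp hh with ⟨h, h'⟩ | ⟨h, h'⟩ <;> simp_all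
  have huw_vw : s(u, w) ≠ s(v, w) := by
    intro hh; rcases Sym2.eq_iff.mp hh with ⟨h, h'⟩ | ⟨h, h'⟩ <;> simp_all
  obtain ⟨m0, hm0⟩ := hy.1 (mkEdge v w hvw)
  have hm0pos : 1 ≤ m0 := by
    by_contra hcon
    push_neg at hcon
    interval_cases m0
    · rw [hm0] at hpos; norm_num at hpos
  have hev' : ∀ p q : Fin n, (hpq : p ≠ q) →
      ev y' p q = ev y p q + (if s(p, q) = s(v, u) then 1 else 0)
        + (if s(p, q) = s(u, w) then 1 else 0)
        - (if s(p, q) = s(v, w) then 1 else 0) := by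
    intro p q hpq
    rw [ev_eq y' p q hpq, ev_eq y p q hpq]
    simp only [hy', indic, mkEdge]
  refine ⟨?_, ?_, ?_⟩
  · -- integrality
    intro e
    by_cases h1 : e.val = s(v, u)
    · have h2 : e.val ≠ s(u, w) := by rw [h1]; exact hvu_uw
      have h3 : e.val ≠ s(v, w) := by rw [h1]; exact hvu_vw
      obtain ⟨m, hm⟩ := hy.1 e
      exact ⟨m + 1, by
        simp only [hy', indic]
        rw [if_pos h1, if_neg h2, if_neg h3, hm]; push_cast; ring⟩
    · by_cases h2 : e.val = s(u, w)
      · have h3 : e.val ≠ s(v, w) := by rw [h2]; exact huw_vw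
        obtain ⟨m, hm⟩ := hy.1 e
        exact ⟨m + 1, by
          simp only [hy', indic]
          rw [if_neg h1, if_pos h2, if_neg h3, hm]; push_cast; ring⟩
      · by_cases h3 : e.val = s(v, w)
        · have he : e = mkEdge v w hvw := Subtype.ext h3
          refine ⟨m0 - 1, ?_⟩
          have : ((m0 - 1 : ℕ) : ℝ) = (m0 : ℝ) - 1 := by
            push_cast [Nat.cast_sub hm0pos]; ring
          simp only [hy', indic]
          rw [if_neg h1, if_neg h2, if_pos h3, he, hm0, this]; ring
        · obtain ⟨m, hm⟩ := hy.1 e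
          exact ⟨m, by
            simp only [hy', indic]
            rw [if_neg h1, if_neg h2, if_neg h3, hm]; ring⟩
  · -- connectivity
    have hAvu : (supportGraph y').Adj v u := by
      refine ⟨(Ne.symm huv), ?_⟩
      rw [hev' v u (Ne.symm huv)]
      have := ev_nonneg_of_eulerian hy v u
      rw [if_pos rfl, if_neg hvu_uw, if_neg hvu_vw]
      linarith
    have hAuw : (supportGraph y').Adj u w := by
      refine ⟨huw, ?_⟩
      rw [hev' u w huw]
      have := ev_nonneg_of_eulerian hy u w
      rw [if_neg (Ne.symm hvu_uw), if_pos rfl, if_neg huw_vw]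
      linarith
    have htrans : ∀ p q, (supportGraph y).Adj p q → (supportGraph y').Reachable p q := by
      intro p q hpq
      obtain ⟨hne, hev⟩ := hpq
      by_cases hc : s(p, q) = s(v, w)
      · rcases Sym2.eq_iff.mp hc with ⟨rfl, rfl⟩ | ⟨rfl, rfl⟩
        · exact hAvu.reachable.trans hAuw.reachable
        · exact (hAuw.symm.reachable).trans hAvu.symm.reachable
      · refine SimpleGraph.Adj.reachable ⟨hne, ?_⟩
        rw [hev' p q hne, if_neg hc]
        have h1 : (0 : ℝ) ≤ if s(p, q) = s(v, u) then 1 else 0 := by positivity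
        have h2 : (0 : ℝ) ≤ if s(p, q) = s(u, w) then 1 else 0 := by positivity
        linarith
    rw [SimpleGraph.connected_iff]
    exact ⟨precon_transfer htrans hy.2.1.preconnected, hy.2.1.nonempty⟩
  · -- degrees
    intro t
    have hdeg : degree y' t = degree y t + degree (indic v u) t
        + degree (indic u w) t - degree (indic v w) t := by
      unfold degree
      rw [← Finset.sum_add_distrib, ← Finset.sum_add_distrib, ← Finset.sum_sub_distrib]
      refine Finset.sum_congr rfl fun e _ => ?_
      by_cases h : t ∈ e.val <;> simp [hy', h]
    obtain ⟨m, hm, hdm⟩ := hy.2.2 t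
    rw [hdeg, degree_indic v u t (Ne.symm huv), degree_indic u w t huw,
      degree_indic v w t hvw, hdm]
    by_cases htu : t = u
    · subst htu
      refine ⟨m + 1, by omega, ?_⟩
      have h1 : t ∈ s(v, t) := by simp
      have h2 : t ∈ s(t, w) := by simp
      have h3 : t ∉ s(v, w) := by
            intro hh; rcases Sym2.mem_iff.mp hh with rfl | rfl <;> simp_all
      rw [if_pos h1, if_pos h2, if_neg h3]
      push_cast; ring
    · by_cases htv : t = v
      · subst htv
        refine ⟨m, hm, ?_⟩
        have h1 : t ∈ s(t, u) := by simp
        have h2 : t ∉ s(u, w) := by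
            intro hh; rcases Sym2.mem_iff.mp hh with rfl | rfl <;> simp_all
        have h3 : t ∈ s(t, w) := by simp
        rw [if_pos h1, if_pos h3, if_neg h2]
        ring
      · by_cases htw : t = w
        · subst htw
          refine ⟨m, hm, ?_⟩
          have h1 : t ∉ s(v, u) := by
            intro hh; rcases Sym2.mem_iff.mp hh with rfl | rfl <;> simp_all
          have h2 : t ∈ s(u, t) := by simp
          have h3 : t ∈ s(v, t) := by simp
          rw [if_neg h1, if_pos h2, if_pos h3]
          ring
        · refine ⟨m, hm, ?_⟩
          have h1 : t ∉ s(v, u) := by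
            intro hh; rcases Sym2.mem_iff.mp hh with rfl | rfl <;> simp_all
          have h2 : t ∉ s(u, w) := by
            intro hh; rcases Sym2.mem_iff.mp hh with rfl | rfl <;> simp_all
          have h3 : t ∉ s(v, w) := by
            intro hh; rcases Sym2.mem_iff.mp hh with rfl | rfl <;> simp_all
          rw [if_neg h1, if_neg h2, if_neg h3]
          ring

end Aux

/-- an inequality defining a nonempty good face of `P` is metric. -/
theorem stmt1 (n : ℕ) (hn : 5 ≤ n) (a : Edge n → ℝ) (α : ℝ)
    (hvalid : ∀ x ∈ gtsp n, α ≤ dot a x)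
    (hne : ({x ∈ gtsp n | dot a x = α}).Nonempty)
    (hgood : IsGood {x ∈ gtsp n | dot a x = α}) :
    IsMetric a := by
  rintro u v w ⟨hvw, huv, huw⟩
  obtain ⟨x, ⟨hxg, hxa⟩, hxe⟩ := hgood (mkEdge v w hvw)
  obtain ⟨y, hyE, hya, hye⟩ :=
    exists_eulerian_on_face a α (mkEdge v w hvw) hvalid x hxg hxa hxe
  have hE' := shortcut_eulerian u v w hvw huv huw hyE hye
  have hv := hvalid _ (eulerian_mem_gtsp hE')
  have hdot : dot a (fun e => y e + indic v u e + indic u w e - indic v w e)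
      = dot a y + dot a (indic v u) + dot a (indic u w) - dot a (indic v w) := by
    unfold dot
    rw [← Finset.sum_add_distrib, ← Finset.sum_add_distrib, ← Finset.sum_sub_distrib]
    exact Finset.sum_congr rfl fun e _ => by ring
  rw [hdot, dot_indic a v u (Ne.symm huv), dot_indic a u w huw,
    dot_indic a v w hvw, hya] at hv
  unfold tri
  linarith

end TSP
end

section
/- For every a ∈ ℝ^E, the vector θ(a) := a − Σ_{u∈V} λ_u(a)·δ_u is tight triangular (TT); moreover λ(a) is the unique such coefficient vector: if μ ∈ ℝ^V is such that a − Σ_{u∈V} μ_u·δ_u is TT, then μ_u = λ_u(a) for every u ∈ V. -/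
open scoped BigOperators

namespace TSP
variable {n : ℕ}
lemma sum_delta (μ : Fin n → ℝ) (x y : Fin n) (h : x ≠ y) (e : Edge n) (he : e.val = s(x, y)) :
    ∑ p, μ p * delta p e = (μ x + μ y) / 2 := by
  have key : ∀ p : Fin n, μ p * delta p e =
      if p ∈ ({x, y} : Finset (Fin n)) then μ p * (1 / 2) else 0 := by
    intro p
    simp only [delta, he, Sym2.mem_iff, Finset.mem_insert, Finset.mem_singleton, mul_ite, mul_zero]
  rw [Finset.sum_congr rfl fun p _ => key p, Finset.sum_ite_mem, Finset.univ_inter,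
    Finset.sum_pair h]
  ring

lemma ev_sub (a : Edge n → ℝ) (μ : Fin n → ℝ) (x y : Fin n) (h : x ≠ y) :
    ev (fun e => a e - ∑ p, μ p * delta p e) x y = ev a x y - (μ x + μ y) / 2 := by
  unfold ev
  rw [dif_neg h, dif_neg h]
  show a _ - ∑ p, μ p * delta p _ = _
  rw [sum_delta μ x y h _ rfl]

lemma tri_sub (a : Edge n → ℝ) (μ : Fin n → ℝ) {u v w : Fin n} (h : RootedTri u v w) :
    tri (fun e => a e - ∑ p, μ p * delta p e) u v w = tri a u v w - μ u := by
  obtain ⟨hvw, huv, huw⟩ := h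
  unfold tri
  rw [ev_sub a μ v u huv.symm, ev_sub a μ u w huw, ev_sub a μ v w hvw]
  ring

lemma exists_rooted (hn : 3 ≤ n) (u : Fin n) : ∃ v w, RootedTri u v w := by
  have h1 : (({u} : Finset (Fin n))ᶜ).Nonempty := by
    rw [← Finset.card_pos, Finset.card_compl]
    simp only [Finset.card_singleton, Fintype.card_fin]
    omega
  obtain ⟨v, hv⟩ := h1
  have h2 : (({u, v} : Finset (Fin n))ᶜ).Nonempty := by
    rw [← Finset.card_pos, Finset.card_compl]
    have hle : ({u, v} : Finset (Fin n)).card ≤ 2 :=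
      (Finset.card_insert_le _ _).trans (by simp)
    have : Fintype.card (Fin n) = n := Fintype.card_fin n
    omega
  obtain ⟨w, hw⟩ := h2
  simp only [Finset.mem_compl, Finset.mem_singleton, Finset.mem_insert, not_or] at hv hw
  exact ⟨v, w, Ne.symm hw.2, Ne.symm hv, Ne.symm hw.1⟩

lemma lamSet_fin (a : Edge n → ℝ) (u : Fin n) :
    {r | ∃ v w, RootedTri u v w ∧ r = tri a u v w}.Finite := by
  apply Set.Finite.subset (Set.finite_range fun p : Fin n × Fin n => tri a u p.1 p.2)
  rintro r ⟨v, w, _, rfl⟩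
  exact ⟨(v, w), rfl⟩

lemma lamSet_ne (hn : 3 ≤ n) (a : Edge n → ℝ) (u : Fin n) :
    {r | ∃ v w, RootedTri u v w ∧ r = tri a u v w}.Nonempty := by
  obtain ⟨v, w, h⟩ := exists_rooted hn u
  exact ⟨tri a u v w, v, w, h, rfl⟩

lemma lam_le (a : Edge n → ℝ) {u v w : Fin n} (h : RootedTri u v w) :
    lam a u ≤ tri a u v w :=
  csInf_le (lamSet_fin a u).bddBelow ⟨v, w, h, rfl⟩

lemma lam_mem (hn : 3 ≤ n) (a : Edge n → ℝ) (u : Fin n) :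
    ∃ v w, RootedTri u v w ∧ lam a u = tri a u v w :=
  (lamSet_ne hn a u).csInf_mem (lamSet_fin a u)

/-- `θ(a)` is the unique TT representative of the coset `a + span δ`. -/
theorem stmt4 (n : ℕ) (hn : 5 ≤ n) (a : Edge n → ℝ) :
    IsTT (theta a) ∧
      ∀ μ : Fin n → ℝ, IsTT (fun e => a e - ∑ u, μ u * delta u e) →
        ∀ u, μ u = lam a u := by
  have h3 : 3 ≤ n := by omega
  constructor
  · constructor
    · intro u v w h
      have heq : tri (theta a) u v w = tri a u v w - lam a u := tri_sub a (lam a) h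
      have := lam_le a h
      linarith
    · intro u
      obtain ⟨v, w, h, heq⟩ := lam_mem h3 a u
      refine ⟨v, w, h, ?_⟩
      have h2 : tri (theta a) u v w = tri a u v w - lam a u := tri_sub a (lam a) h
      linarith
  · intro μ hμ u
    have hub : μ u ≤ lam a u := by
      apply le_csInf (lamSet_ne h3 a u)
      rintro r ⟨v, w, h, rfl⟩
      have := hμ.1 u v w h
      rw [tri_sub a μ h] at this
      linarith
    obtain ⟨v, w, h, hz⟩ := hμ.2 u
    rw [tri_sub a μ h] at hz
    have := lam_le a h
    linarith

end TSP
end
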